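/- Let X be a normal Hausdorff space. Then the spaces L(X), L₀(X), and MC(X), each equipped with the upper Vietoris topology τ_V⁺, are Baire spaces. -/

import Mathlib

open Set Topology TopologicalSpace

/-- The set of values of a set-valued map (identified with its graph) at a point. -/
def valuesAt {X : Type*} (F : Set (X × ℝ)) (x : X) : Set ℝ := {y | (x, y) ∈ F}

/-- A set-valued map (identified with its graph) is cusco: upper semicontinuous at every
point, with nonempty compact convex values. -/
def IsCusco {X : Type*} [TopologicalSpace X] (F : Set (X × ℝ)) : Prop :=
  (∀ x : X, ∀ V : Set ℝ, IsOpen V → valuesAt F x ⊆ V →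
    ∃ U : Set X, IsOpen U ∧ x ∈ U ∧ ∀ u ∈ U, valuesAt F u ⊆ V) ∧
  (∀ x : X, (valuesAt F x).Nonempty ∧ IsCompact (valuesAt F x) ∧ Convex ℝ (valuesAt F x))

/-- A minimal cusco map, i.e. a cusco map containing no proper cusco submap. -/
def IsMinimalCusco {X : Type*} [TopologicalSpace X] (F : Set (X × ℝ)) : Prop :=
  IsCusco F ∧ ∀ G : Set (X × ℝ), IsCusco G → G ⊆ F → G = F

/-- `L(X)`: all cusco maps from `X` to `ℝ`. -/
def LSet (X : Type*) [TopologicalSpace X] : Set (Set (X × ℝ)) := {F | IsCusco F}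

/-- `L₀(X)`: cusco maps that are single-valued at each isolated point. -/
def L0Set (X : Type*) [TopologicalSpace X] : Set (Set (X × ℝ)) :=
  {F | IsCusco F ∧ ∀ x : X, IsOpen ({x} : Set X) → ∃ y : ℝ, valuesAt F x = {y}}

/-- `MC(X)`: all minimal cusco maps from `X` to `ℝ`. -/
def MCSet (X : Type*) [TopologicalSpace X] : Set (Set (X × ℝ)) := {F | IsMinimalCusco F}

/-- The upper Vietoris topology on a family of subsets of `X × ℝ`. -/
def upperVietoris {X : Type*} [TopologicalSpace X] (S : Set (Set (X × ℝ))) :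
    TopologicalSpace S :=
  .generateFrom {U | ∃ W : Set (X × ℝ), IsOpen W ∧ U = {A : S | (A : Set (X × ℝ)) ⊆ W}}

/-- The Vietoris topology on a family of subsets of `X × ℝ`. -/
def vietoris {X : Type*} [TopologicalSpace X] (S : Set (Set (X × ℝ))) :
    TopologicalSpace S :=
  .generateFrom
    ({U | ∃ W : Set (X × ℝ), IsOpen W ∧ U = {A : S | (A : Set (X × ℝ)) ⊆ W}} ∪
     {U | ∃ W : Set (X × ℝ), IsOpen W ∧ U = {A : S | ((A : Set (X × ℝ)) ∩ W).Nonempty}})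

/-- The graph of a function `X → ℝ`. -/
def graphOf {X : Type*} (f : X → ℝ) : Set (X × ℝ) := {p | p.2 = f p.1}

/-- `X` is countably compact: every countable open cover has a finite subcover. -/
def CountablyCompact (X : Type*) [TopologicalSpace X] : Prop :=
  ∀ U : ℕ → Set X, (∀ n, IsOpen (U n)) → (⋃ n, U n) = Set.univ →
    ∃ t : Finset ℕ, (⋃ n ∈ t, U n) = Set.univ

set_option linter.unusedSectionVars false

namespace BUV

variable {X : Type*} [TopologicalSpace X]

section Insertion
variable [NormalSpace X]

private noncomputable def eQ : ℕ ≃ ℚ := (Denumerable.eqv ℚ).symm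

/-- goodness of a partial family -/
def Good (A B : ℚ → Set X) (n : ℕ) (W : ℕ → Set X) : Prop :=
  (∀ m, m < n → IsOpen (W m) ∧ A (eQ m) ⊆ W m ∧ closure (W m) ⊆ B (eQ m)) ∧
  (∀ m, m < n → ∀ m', m' < n → eQ m < eQ m' → closure (W m) ⊆ W m')

theorem good_zero (A B : ℚ → Set X) (W : ℕ → Set X) : Good A B 0 W :=
  ⟨fun m hm => absurd hm (Nat.not_lt_zero m), fun m hm => absurd hm (Nat.not_lt_zero m)⟩

theorem good_extend {A B : ℚ → Set X} (hA : ∀ q, IsClosed (A q)) (hB : ∀ q, IsOpen (B q))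
    (hAmono : ∀ p q : ℚ, p ≤ q → A p ⊆ A q) (hBmono : ∀ p q : ℚ, p ≤ q → B p ⊆ B q)
    (hAB : ∀ q, A q ⊆ B q) (n : ℕ) (W : ℕ → Set X) (hW : Good A B n W) :
    ∃ Wn : Set X, Good A B (n + 1) (Function.update W n Wn) := by
  classical
  set C : Set X := A (eQ n) ∪ ⋃ m ∈ {m : ℕ | m < n ∧ eQ m < eQ n}, closure (W m) with hC
  set O : Set X := B (eQ n) ∩ ⋂ m ∈ {m : ℕ | m < n ∧ eQ n < eQ m}, W m with hO
  have hfin1 : {m : ℕ | m < n ∧ eQ m < eQ n}.Finite :=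
    (Set.finite_Iio n).subset (fun m hm => hm.1)
  have hfin2 : {m : ℕ | m < n ∧ eQ n < eQ m}.Finite :=
    (Set.finite_Iio n).subset (fun m hm => hm.1)
  have hCclosed : IsClosed C :=
    (hA _).union (hfin1.isClosed_biUnion (fun m _ => isClosed_closure))
  have hOopen : IsOpen O :=
    (hB _).inter (hfin2.isOpen_biInter (fun m hm => (hW.1 m hm.1).1))
  have hCO : C ⊆ O := by
    rintro x (hx | hx)
    · constructor
      · exact hAB _ hx
      · refine mem_biInter fun m hm => ?_
        exact (hW.1 m hm.1).2.1 (hAmono _ _ (le_of_lt hm.2) hx)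
    · simp only [mem_iUnion, exists_prop] at hx
      obtain ⟨m, ⟨hmn, hmq⟩, hxm⟩ := hx
      constructor
      · exact (hBmono _ _ (le_of_lt hmq)) ((hW.1 m hmn).2.2 hxm)
      · refine mem_biInter fun m' hm' => ?_
        exact hW.2 m hmn m' hm'.1 (lt_trans hmq hm'.2) hxm
  obtain ⟨Wn, hWnopen, hCWn, hWnO⟩ := normal_exists_closure_subset hCclosed hOopen hCO
  refine ⟨Wn, ?_, ?_⟩
  · intro m hm
    rcases Nat.lt_succ_iff_lt_or_eq.1 hm with hm' | rfl
    · rw [Function.update_of_ne (Nat.ne_of_lt hm')]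
      exact hW.1 m hm'
    · rw [Function.update_self]
      refine ⟨hWnopen, fun x hx => hCWn (Or.inl hx), hWnO.trans (inter_subset_left)⟩
  · intro m hm m' hm' hlt
    rcases Nat.lt_succ_iff_lt_or_eq.1 hm with hm1 | rfl <;>
      rcases Nat.lt_succ_iff_lt_or_eq.1 hm' with hm2 | rfl
    · rw [Function.update_of_ne (Nat.ne_of_lt hm1), Function.update_of_ne (Nat.ne_of_lt hm2)]
      exact hW.2 m hm1 m' hm2 hlt
    · rw [Function.update_of_ne (Nat.ne_of_lt hm1), Function.update_self]
      exact fun x hx => hCWn (Or.inr (mem_biUnion ⟨hm1, hlt⟩ hx))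
    · rw [Function.update_of_ne (Nat.ne_of_lt hm2), Function.update_self]
      exact fun x hx => mem_iInter₂.1 (hWnO hx).2 m' ⟨hm2, hlt⟩
    · exact absurd hlt (lt_irrefl _)


theorem insertion {A B : ℚ → Set X} (hA : ∀ q, IsClosed (A q)) (hB : ∀ q, IsOpen (B q))
    (hAmono : ∀ p q : ℚ, p ≤ q → A p ⊆ A q) (hBmono : ∀ p q : ℚ, p ≤ q → B p ⊆ B q)
    (hAB : ∀ q, A q ⊆ B q) (hcov : ∀ x : X, ∃ q, x ∈ A q) (hexc : ∀ x : X, ∃ q, x ∉ B q) :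
    ∃ f : X → ℝ, Continuous f ∧ (∀ (x : X) (q : ℚ), f x < (q : ℝ) → x ∈ B q) ∧
      (∀ (x : X) (q : ℚ), (q : ℝ) < f x → x ∉ A q) := by
  classical
  -- build the whole family by recursion
  let S : ∀ n : ℕ, {W : ℕ → Set X // Good A B n W} := fun n =>
    Nat.rec ⟨fun _ => (∅ : Set X), good_zero A B _⟩
      (fun n p =>
        ⟨Function.update p.1 n (Classical.choose (good_extend hA hB hAmono hBmono hAB n p.1 p.2)),
          Classical.choose_spec (good_extend hA hB hAmono hBmono hAB n p.1 p.2)⟩) n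
  have hSsucc : ∀ n : ℕ, (S (n + 1)).1 =
      Function.update (S n).1 n
        (Classical.choose (good_extend hA hB hAmono hBmono hAB n (S n).1 (S n).2)) :=
    fun n => rfl
  have agree : ∀ n m : ℕ, m < n → (S n).1 m = (S (m + 1)).1 m := by
    intro n
    induction n with
    | zero => intro m hm; exact absurd hm (Nat.not_lt_zero m)
    | succ n ih =>
      intro m hm
      rcases Nat.lt_succ_iff_lt_or_eq.1 hm with hm' | rfl
      · rw [hSsucc n, Function.update_of_ne (Nat.ne_of_lt hm')]
        exact ih m hm'
      · rfl
  set W : ℚ → Set X := fun q => (S ((eQ.symm q) + 1)).1 (eQ.symm q) with hWdef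
  have key : ∀ q : ℚ, IsOpen (W q) ∧ A q ⊆ W q ∧ closure (W q) ⊆ B q := by
    intro q
    have h := (S ((eQ.symm q) + 1)).2.1 (eQ.symm q) (Nat.lt_succ_self _)
    rwa [Equiv.apply_symm_apply] at h
  have cross : ∀ p q : ℚ, p < q → closure (W p) ⊆ W q := by
    intro p q hpq
    set i := eQ.symm p
    set j := eQ.symm q
    set N := max i j + 1
    have hiN : i < N := Nat.lt_succ_of_le (le_max_left _ _)
    have hjN : j < N := Nat.lt_succ_of_le (le_max_right _ _)
    have h := (S N).2.2 i hiN j hjN (by rwa [Equiv.apply_symm_apply, Equiv.apply_symm_apply])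
    rwa [agree N i hiN, agree N j hjN] at h
  -- define f
  set Sx : X → Set ℝ := fun x => ((↑) : ℚ → ℝ) '' {q : ℚ | x ∈ W q} with hSx
  have hne : ∀ x, (Sx x).Nonempty := by
    intro x
    obtain ⟨q, hq⟩ := hcov x
    exact ⟨q, ⟨q, (key q).2.1 hq, rfl⟩⟩
  have hbdd : ∀ x, ∃ q0 : ℚ, ∀ r ∈ Sx x, (q0 : ℝ) ≤ r := by
    intro x
    obtain ⟨q0, hq0⟩ := hexc x
    refine ⟨q0, ?_⟩
    rintro r ⟨q, hq, rfl⟩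
    by_contra hlt
    push_neg at hlt
    have : (q : ℚ) < q0 := by exact_mod_cast hlt
    exact hq0 (hBmono q q0 (le_of_lt this) ((key q).2.2 (subset_closure hq)))
  have hbddB : ∀ x, BddBelow (Sx x) := fun x => by
    obtain ⟨q0, h⟩ := hbdd x; exact ⟨q0, fun r hr => h r hr⟩
  set f : X → ℝ := fun x => sInf (Sx x) with hf
  have hfle : ∀ x (q : ℚ), x ∈ W q → f x ≤ q := fun x q hq =>
    csInf_le (hbddB x) ⟨q, hq, rfl⟩
  have hfltB : ∀ x (q : ℚ), f x < q → x ∈ B q := by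
    intro x q hlt
    obtain ⟨r, hr, hrq⟩ := exists_lt_of_csInf_lt (hne x) hlt
    obtain ⟨p, hp, rfl⟩ := hr
    have hpq : p ≤ q := by exact_mod_cast le_of_lt hrq
    exact hBmono p q hpq ((key p).2.2 (subset_closure hp))
  have hfgtA : ∀ x (q : ℚ), (q : ℝ) < f x → x ∉ A q := by
    intro x q hlt hxA
    exact absurd (hfle x q ((key q).2.1 hxA)) (not_le.2 hlt)
  have hfgeW : ∀ x (p : ℚ), x ∉ closure (W p) → (p : ℝ) ≤ f x := by
    intro x p hx
    refine le_csInf (hne x) ?_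
    rintro r ⟨q, hq, rfl⟩
    by_contra h
    push_neg at h
    have hqp : q < p := by exact_mod_cast h
    exact hx (subset_closure (cross q p hqp (subset_closure hq)))
  have hopen_lt : ∀ a : ℝ, IsOpen {x | f x < a} := by
    intro a
    rw [isOpen_iff_mem_nhds]
    intro x hx
    obtain ⟨r, hr, hra⟩ := exists_lt_of_csInf_lt (hne x) hx
    obtain ⟨p, hp, rfl⟩ := hr
    refine Filter.mem_of_superset (((key p).1).mem_nhds hp) ?_
    exact fun y hy => lt_of_le_of_lt (hfle y p hy) hra
  have hopen_gt : ∀ a : ℝ, IsOpen {x | a < f x} := by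
    intro a
    rw [isOpen_iff_mem_nhds]
    intro x hx
    obtain ⟨p, hap, hpf⟩ := exists_rat_btwn (show a < f x from hx)
    obtain ⟨p', hpp', hp'f⟩ := exists_rat_btwn hpf
    have hpp'Q : p < p' := by exact_mod_cast hpp'
    have hxnc : x ∉ closure (W p) := by
      intro hc
      have : x ∈ W p' := cross p p' hpp'Q hc
      exact absurd (hfle x p' this) (not_le.2 hp'f)
    refine Filter.mem_of_superset ((isClosed_closure.isOpen_compl).mem_nhds hxnc) ?_
    exact fun y hy => lt_of_lt_of_le hap (hfgeW y p hy)
  have hcont : Continuous f := by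
    rw [continuous_iff_continuousAt]
    intro x
    rw [ContinuousAt, Metric.tendsto_nhds]
    intro ε hε
    have h1 : x ∈ {y | f y < f x + ε} := by simp [hε]
    have h2 : x ∈ {y | f x - ε < f y} := by simp [hε]
    filter_upwards [(hopen_lt (f x + ε)).mem_nhds h1, (hopen_gt (f x - ε)).mem_nhds h2]
      with y hy1 hy2
    rw [Real.dist_eq, abs_sub_lt_iff]
    constructor <;> [linarith [hy1, hy2]; linarith [hy1, hy2]]
  exact ⟨f, hcont, hfltB, hfgtA⟩

end Insertion

/-- tube lemma for vertical segments -/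
theorem seg_tube {V : Set (X × ℝ)} (hV : IsOpen V) {x : X} {a b : ℝ} (hab : a ≤ b)
    (h : ∀ y ∈ Icc a b, (x, y) ∈ V) :
    ∃ (U : Set X) (δ : ℝ), IsOpen U ∧ x ∈ U ∧ 0 < δ ∧
      ∀ x' ∈ U, ∀ y ∈ Ioo (a - δ) (b + δ), (x', y) ∈ V := by
  have hsub : ({x} : Set X) ×ˢ Icc a b ⊆ V := by
    rintro ⟨x', y⟩ ⟨hx', hy⟩
    rcases hx' with rfl
    exact h y hy
  obtain ⟨u, v, hu, hv, hxu, hIv, huv⟩ :=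
    generalized_tube_lemma isCompact_singleton isCompact_Icc hV hsub
  obtain ⟨δ, hδ, hth⟩ := isCompact_Icc.exists_thickening_subset_open hv hIv
  refine ⟨u, δ, hu, hxu (mem_singleton x), hδ, ?_⟩
  intro x' hx' y hy
  have hyv : y ∈ v := by
    apply hth
    rw [Metric.mem_thickening_iff]
    refine ⟨max a (min b y), ⟨le_max_left _ _, max_le hab (min_le_left _ _)⟩, ?_⟩
    rw [Real.dist_eq, abs_sub_lt_iff]
    obtain ⟨hy1, hy2⟩ := hy
    constructor
    · rcases le_total b y with h2 | h2
      · have hb : (b : ℝ) ≤ max a (min b y) := by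
          rw [min_eq_left h2]; exact le_max_right _ _
        linarith
      · have hb : y ≤ max a (min b y) := by
          rw [min_eq_right h2]; exact le_max_right _ _
        linarith
    · rcases le_total a y with h1 | h1
      · have hb : max a (min b y) ≤ y :=
          max_le h1 (min_le_right _ _)
        linarith
      · have hb : max a (min b y) ≤ a :=
          max_le (le_refl _) ((min_le_right _ _).trans h1)
        linarith
  exact huv ⟨hx', hyv⟩

theorem fiber_eq_Icc {F : Set (X × ℝ)} (hF : IsCusco F) (x : X) :
    valuesAt F x = Icc (sInf (valuesAt F x)) (sSup (valuesAt F x)) := by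
  obtain ⟨hne, hcp, hcv⟩ := hF.2 x
  apply Subset.antisymm
  · exact fun y hy => ⟨csInf_le hcp.bddBelow hy, le_csSup hcp.bddAbove hy⟩
  · exact hcv.ordConnected.out (hcp.sInf_mem hne) (hcp.sSup_mem hne)

section Selection
variable [NormalSpace X]

theorem selection_bounded {F V : Set (X × ℝ)} (hF : IsCusco F) (hV : IsOpen V)
    (hFV : F ⊆ V) (hstrip : ∀ p ∈ V, p.2 ∈ Ioo (-1 : ℝ) 1) :
    ∃ f : X → ℝ, Continuous f ∧ ∀ x, (x, f x) ∈ V := by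
  classical
  set fib : X → Set ℝ := fun x => valuesAt F x with hfibdef
  set m : X → ℝ := fun x => sInf (fib x) with hmdef
  set M : X → ℝ := fun x => sSup (fib x) with hMdef
  have hfibIcc : ∀ x, fib x = Icc (m x) (M x) := fun x => fiber_eq_Icc hF x
  have hfibV : ∀ x, ∀ y ∈ fib x, (x, y) ∈ V := fun x y hy => hFV hy
  have hmem : ∀ x, m x ∈ fib x ∧ M x ∈ fib x := by
    intro x
    obtain ⟨hne, hcp, _⟩ := hF.2 x
    exact ⟨hcp.sInf_mem hne, hcp.sSup_mem hne⟩
  have hmM : ∀ x, m x ≤ M x := by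
    intro x
    have := (hmem x).1
    rw [hfibIcc x] at this
    exact this.2
  have hmIoo : ∀ x, m x ∈ Ioo (-1 : ℝ) 1 := fun x => hstrip _ (hfibV x _ (hmem x).1)
  have hMIoo : ∀ x, M x ∈ Ioo (-1 : ℝ) 1 := fun x => hstrip _ (hfibV x _ (hmem x).2)
  set lamset : X → Set ℝ := fun x => {t | ∀ y ∈ Icc t (m x), (x, y) ∈ V} with hlamset
  set gset : X → Set ℝ := fun x => {t | ∀ y ∈ Icc (m x) t, (x, y) ∈ V} with hgset
  set lam : X → ℝ := fun x => sInf (lamset x) with hlamdef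
  set g : X → ℝ := fun x => sSup (gset x) with hgdef
  have hm_lamset : ∀ x, m x ∈ lamset x := by
    intro x y hy
    have : y = m x := le_antisymm hy.2 hy.1
    rw [this]; exact hfibV x _ (hmem x).1
  have hM_gset : ∀ x, M x ∈ gset x := by
    intro x y hy
    apply hfibV x
    rw [hfibIcc x]; exact hy
  have hlamset_gt : ∀ x, ∀ t ∈ lamset x, (-1 : ℝ) < t := by
    intro x t ht
    by_contra hle
    push_neg at hle
    have h1 : (-1 : ℝ) ∈ Icc t (m x) := ⟨hle, le_of_lt (hmIoo x).1⟩
    have := hstrip _ (ht _ h1)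
    exact absurd this.1 (lt_irrefl _)
  have hgset_lt : ∀ x, ∀ t ∈ gset x, t < 1 := by
    intro x t ht
    by_contra hle
    push_neg at hle
    have h1 : (1 : ℝ) ∈ Icc (m x) t := ⟨le_of_lt (hmIoo x).2, hle⟩
    have := hstrip _ (ht _ h1)
    exact absurd this.2 (lt_irrefl _)
  have hlam_bdd : ∀ x, BddBelow (lamset x) :=
    fun x => ⟨-1, fun t ht => le_of_lt (hlamset_gt x t ht)⟩
  have hg_bdd : ∀ x, BddAbove (gset x) :=
    fun x => ⟨1, fun t ht => le_of_lt (hgset_lt x t ht)⟩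
  have hlam_ne : ∀ x, (lamset x).Nonempty := fun x => ⟨m x, hm_lamset x⟩
  have hg_ne : ∀ x, (gset x).Nonempty := fun x => ⟨M x, hM_gset x⟩
  have hlam_le_m : ∀ x, lam x ≤ m x := fun x => csInf_le (hlam_bdd x) (hm_lamset x)
  have hM_le_g : ∀ x, M x ≤ g x := fun x => le_csSup (hg_bdd x) (hM_gset x)
  have hlam_ge : ∀ x, (-1 : ℝ) ≤ lam x :=
    fun x => le_csInf (hlam_ne x) (fun t ht => le_of_lt (hlamset_gt x t ht))
  have hg_le : ∀ x, g x ≤ 1 :=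
    fun x => csSup_le (hg_ne x) (fun t ht => le_of_lt (hgset_lt x t ht))
  have hM_lt_g : ∀ x, M x < g x := by
    intro x
    obtain ⟨U, δ, hU, hxU, hδ, htube⟩ := seg_tube hV (hmM x) (by
      intro y hy
      apply hfibV x
      rw [hfibIcc x]; exact hy)
    have : M x + δ / 2 ∈ gset x := by
      intro y hy
      exact htube x hxU y ⟨lt_of_lt_of_le (by linarith) hy.1, lt_of_le_of_lt hy.2 (by linarith)⟩
    have := le_csSup (hg_bdd x) this
    linarith
  have hlam_lt : ∀ x t, lam x < t → t ≤ m x → ∀ y ∈ Icc t (m x), (x, y) ∈ V := by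
    intro x t ht _htm y hy
    obtain ⟨s, hs, hst⟩ := exists_lt_of_csInf_lt (hlam_ne x) ht
    exact hs y ⟨le_trans (le_of_lt hst) hy.1, hy.2⟩
  have hg_gt : ∀ x t, t < g x → m x ≤ t → ∀ y ∈ Icc (m x) t, (x, y) ∈ V := by
    intro x t ht _htm y hy
    obtain ⟨s, hs, hst⟩ := exists_lt_of_lt_csSup (hg_ne x) ht
    exact hs y ⟨hy.1, le_trans hy.2 (le_of_lt hst)⟩
  -- the two families
  set Aq : ℚ → Set X := fun q => {x | m x + g x ≤ 2 * q} with hAqdef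
  set Bq : ℚ → Set X := fun q => {x | lam x + M x < 2 * q} with hBqdef
  have hBopen : ∀ c : ℝ, IsOpen {x | lam x + M x < c} := by
    intro c
    rw [isOpen_iff_mem_nhds]
    intro x₀ hx₀
    simp only [mem_setOf_eq] at hx₀
    obtain ⟨t₀, ht₀mem, ht₀⟩ := exists_lt_of_csInf_lt (hlam_ne x₀) (show lam x₀ < c - M x₀ by linarith)
    -- a useful element t ≤ m x₀ in lamset with t < c - M x₀
    obtain ⟨t, htmem, htm, htlt⟩ :
        ∃ t, t ∈ lamset x₀ ∧ t ≤ m x₀ ∧ t < c - M x₀ := by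
      rcases le_total t₀ (m x₀) with h | h
      · exact ⟨t₀, ht₀mem, h, ht₀⟩
      · refine ⟨m x₀, hm_lamset x₀, le_refl _, lt_of_le_of_lt h ht₀⟩
    have hseg : ∀ y ∈ Icc t (M x₀), (x₀, y) ∈ V := by
      intro y hy
      rcases le_total y (m x₀) with h | h
      · exact htmem y ⟨hy.1, h⟩
      · apply hfibV x₀; rw [hfibIcc x₀]; exact ⟨h, hy.2⟩
    obtain ⟨U₀, δ₀, hU₀, hxU₀, hδ₀, htube⟩ := seg_tube hV (le_trans htm (hmM x₀)) hseg
    set δ : ℝ := min δ₀ ((c - M x₀ - t) / 2) with hδdef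
    have hδpos : 0 < δ := lt_min hδ₀ (by linarith)
    have hδle : δ ≤ δ₀ := min_le_left _ _
    have hδle2 : δ ≤ (c - M x₀ - t) / 2 := min_le_right _ _
    obtain ⟨U₁, hU₁, hxU₁, husc⟩ := hF.1 x₀ (Ioo (t - δ) (M x₀ + δ)) isOpen_Ioo (by
      rw [show valuesAt F x₀ = fib x₀ from rfl, hfibIcc x₀]
      intro y hy
      exact ⟨lt_of_lt_of_le (by linarith) hy.1, lt_of_le_of_lt hy.2 (by linarith)⟩)
    refine Filter.mem_of_superset ((hU₀.inter hU₁).mem_nhds ⟨hxU₀, hxU₁⟩) ?_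
    rintro u ⟨huU₀, huU₁⟩
    have hfibu : fib u ⊆ Ioo (t - δ) (M x₀ + δ) := husc u huU₁
    have hmu : m u ∈ Ioo (t - δ) (M x₀ + δ) := hfibu (hmem u).1
    have hMu : M u ∈ Ioo (t - δ) (M x₀ + δ) := hfibu (hmem u).2
    have hlamu : lam u ≤ t := by
      rcases le_total t (m u) with h | h
      · apply csInf_le (hlam_bdd u)
        intro y hy
        apply htube u huU₀ y
        constructor
        · exact lt_of_lt_of_le (by linarith) hy.1
        · exact lt_of_le_of_lt hy.2 (lt_of_lt_of_le hmu.2 (by linarith))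
      · exact le_trans (hlam_le_m u) h
    show lam u + M u < c
    have := hMu.2
    linarith
  have hAclosed_aux : ∀ c : ℝ, IsOpen {x | c < m x + g x} := by
    intro c
    rw [isOpen_iff_mem_nhds]
    intro x₀ hx₀
    simp only [mem_setOf_eq] at hx₀
    obtain ⟨t₀, ht₀mem, ht₀⟩ := exists_lt_of_lt_csSup (hg_ne x₀) (show c - m x₀ < g x₀ by linarith)
    obtain ⟨t, htmem, htM, htgt⟩ :
        ∃ t, t ∈ gset x₀ ∧ M x₀ ≤ t ∧ c - m x₀ < t := by
      rcases le_total (M x₀) t₀ with h | h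
      · exact ⟨t₀, ht₀mem, h, ht₀⟩
      · exact ⟨M x₀, hM_gset x₀, le_refl _, lt_of_lt_of_le ht₀ h⟩
    have hseg : ∀ y ∈ Icc (m x₀) t, (x₀, y) ∈ V := fun y hy => htmem y hy
    obtain ⟨U₀, δ₀, hU₀, hxU₀, hδ₀, htube⟩ := seg_tube hV (le_trans (hmM x₀) htM) hseg
    set δ : ℝ := min δ₀ ((m x₀ + t - c) / 2) with hδdef
    have hδpos : 0 < δ := lt_min hδ₀ (by linarith)
    have hδle : δ ≤ δ₀ := min_le_left _ _
    have hδle2 : δ ≤ (m x₀ + t - c) / 2 := min_le_right _ _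
    obtain ⟨U₁, hU₁, hxU₁, husc⟩ := hF.1 x₀ (Ioo (m x₀ - δ) (t + δ)) isOpen_Ioo (by
      rw [show valuesAt F x₀ = fib x₀ from rfl, hfibIcc x₀]
      intro y hy
      exact ⟨lt_of_lt_of_le (by linarith) hy.1, lt_of_le_of_lt (le_trans hy.2 htM) (by linarith)⟩)
    refine Filter.mem_of_superset ((hU₀.inter hU₁).mem_nhds ⟨hxU₀, hxU₁⟩) ?_
    rintro u ⟨huU₀, huU₁⟩
    have hfibu : fib u ⊆ Ioo (m x₀ - δ) (t + δ) := husc u huU₁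
    have hmu : m u ∈ Ioo (m x₀ - δ) (t + δ) := hfibu (hmem u).1
    have hgu : t ≤ g u := by
      apply le_csSup (hg_bdd u)
      intro y hy
      apply htube u huU₀ y
      constructor
      · exact lt_of_lt_of_le (by linarith [hmu.1]) hy.1
      · exact lt_of_le_of_lt hy.2 (by linarith)
    show c < m u + g u
    have := hmu.1
    linarith
  obtain ⟨f, hfc, hfB, hfA⟩ := insertion (A := Aq) (B := Bq)
    (fun q => by
      have : Aq q = {x | (2 : ℝ) * q < m x + g x}ᶜ := by
        ext x; simp [hAqdef, not_lt]
      rw [this]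
      exact (hAclosed_aux _).isClosed_compl)
    (fun q => hBopen _)
    (fun p q hpq x hx => by
      simp only [hAqdef, mem_setOf_eq] at *
      have : (p : ℝ) ≤ q := by exact_mod_cast hpq
      linarith)
    (fun p q hpq x hx => by
      simp only [hBqdef, mem_setOf_eq] at *
      have : (p : ℝ) ≤ q := by exact_mod_cast hpq
      linarith)
    (fun q x hx => by
      simp only [hAqdef, hBqdef, mem_setOf_eq] at *
      have h1 := hlam_le_m x
      have h2 := hM_lt_g x
      linarith)
    (fun x => ⟨1, by
      simp only [hAqdef, mem_setOf_eq]
      have h1 := (hmIoo x).2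
      have h2 := hg_le x
      push_cast
      linarith⟩)
    (fun x => ⟨-1, by
      simp only [hBqdef, mem_setOf_eq]
      have h1 := hlam_ge x
      have h2 := (hMIoo x).1
      push_cast
      intro h
      linarith⟩)
  refine ⟨f, hfc, ?_⟩
  intro x
  have hlow : lam x + M x ≤ 2 * f x := by
    by_contra h
    push_neg at h
    obtain ⟨q, hq1, hq2⟩ := exists_rat_btwn (show f x < (lam x + M x) / 2 by linarith)
    have := hfB x q hq1
    simp only [hBqdef, mem_setOf_eq] at this
    linarith
  have hhigh : 2 * f x ≤ m x + g x := by
    by_contra h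
    push_neg at h
    obtain ⟨q, hq1, hq2⟩ := exists_rat_btwn (show (m x + g x) / 2 < f x by linarith)
    have := hfA x q hq2
    simp only [hAqdef, mem_setOf_eq, not_le] at this
    linarith
  rcases lt_or_ge (f x) (m x) with h1 | h1
  · have hlamf : lam x < f x := by
      have := hmM x
      linarith
    exact hlam_lt x (f x) hlamf (le_of_lt h1) (f x) ⟨le_refl _, le_of_lt h1⟩
  rcases le_or_gt (f x) (M x) with h2 | h2
  · apply hfibV x
    rw [hfibIcc x]
    exact ⟨h1, h2⟩
  · have hgf : f x < g x := by
      have := hmM x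
      linarith
    exact hg_gt x (f x) hgf (le_of_lt (lt_of_le_of_lt (hmM x) h2)) (f x)
      ⟨le_of_lt (lt_of_le_of_lt (hmM x) h2), le_refl _⟩


/-- general continuous selection through an open set containing a cusco -/
theorem selection {F V : Set (X × ℝ)} (hF : IsCusco F) (hV : IsOpen V)
    (hFV : F ⊆ V) : ∃ f : X → ℝ, Continuous f ∧ ∀ x, (x, f x) ∈ V := by
  classical
  set φ : ℝ → ℝ := fun t => t / (1 + |t|) with hφdef
  have hden : ∀ t : ℝ, (0:ℝ) < 1 + |t| := fun t => by positivity
  have hφcont : Continuous φ :=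
    continuous_id.div (continuous_const.add continuous_abs) (fun t => ne_of_gt (hden t))
  have hφmono : StrictMono φ := by
    intro s t hst
    have hs : (0:ℝ) < 1 + |s| := hden s
    have ht : (0:ℝ) < 1 + |t| := hden t
    rw [hφdef]
    simp only
    rw [div_lt_div_iff₀ hs ht]
    rcases le_total 0 s with hs0 | hs0
    · rw [abs_of_nonneg hs0, abs_of_nonneg (le_trans hs0 hst.le)]
      nlinarith
    · rcases le_total 0 t with ht0 | ht0
      · rw [abs_of_nonpos hs0, abs_of_nonneg ht0]
        nlinarith
      · rw [abs_of_nonpos hs0, abs_of_nonpos ht0]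
        nlinarith
  have hφIoo : ∀ t, φ t ∈ Ioo (-1 : ℝ) 1 := by
    intro t
    constructor
    · rw [lt_div_iff₀ (hden t)]
      have := neg_abs_le t
      linarith
    · rw [div_lt_one (hden t)]
      have := le_abs_self t
      linarith
  have hψφ : ∀ t, φ t / (1 - |φ t|) = t := by
    intro t
    have h1 : |φ t| = |t| / (1 + |t|) := by
      rw [hφdef]
      simp only
      rw [abs_div, abs_of_pos (hden t)]
    rw [h1, hφdef]
    simp only
    have h2 : 1 - |t| / (1 + |t|) = 1 / (1 + |t|) := by
      field_simp
      ring
    rw [h2]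
    field_simp
  set V' : Set (X × ℝ) := {p | p.2 ∈ Ioo (-1 : ℝ) 1 ∧ (p.1, p.2 / (1 - |p.2|)) ∈ V} with hV'def
  have hS₁ : IsOpen {p : X × ℝ | p.2 ∈ Ioo (-1 : ℝ) 1} := isOpen_Ioo.preimage continuous_snd
  have hV'open : IsOpen V' := by
    have hcont : ContinuousOn (fun p : X × ℝ => (p.1, p.2 / (1 - |p.2|)))
        {p : X × ℝ | p.2 ∈ Ioo (-1 : ℝ) 1} := by
      apply ContinuousOn.prodMk continuous_fst.continuousOn
      apply ContinuousOn.div continuous_snd.continuousOn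
        (continuous_const.sub (continuous_abs.comp continuous_snd)).continuousOn
      intro p hp
      have h1 : |p.2| < 1 := abs_lt.2 ⟨hp.1, hp.2⟩
      simp only [Pi.sub_apply, Function.comp_apply]
      intro h
      linarith
    have heq : V' = {p : X × ℝ | p.2 ∈ Ioo (-1 : ℝ) 1} ∩
        (fun p : X × ℝ => (p.1, p.2 / (1 - |p.2|))) ⁻¹' V := by
      ext p
      simp only [hV'def, mem_setOf_eq, mem_inter_iff, mem_preimage]
    rw [heq]
    exact hcont.isOpen_inter_preimage hS₁ hV
  set F' : Set (X × ℝ) := (fun p : X × ℝ => (p.1, φ p.2)) '' F with hF'def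
  have hVal : ∀ x, valuesAt F' x = φ '' valuesAt F x := by
    intro x
    ext y
    constructor
    · rintro ⟨⟨a, b⟩, hab, heq⟩
      simp only [Prod.mk.injEq] at heq
      obtain ⟨h1, h2⟩ := heq
      subst h1
      exact ⟨b, hab, h2⟩
    · rintro ⟨b, hb, rfl⟩
      exact ⟨(x, b), hb, rfl⟩
  have hF' : IsCusco F' := by
    constructor
    · intro x O hO hsub
      rw [hVal x, image_subset_iff] at hsub
      obtain ⟨U, hU, hxU, h⟩ := hF.1 x (φ ⁻¹' O) (hO.preimage hφcont) hsub
      exact ⟨U, hU, hxU, fun u hu => by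
        rw [hVal u, image_subset_iff]
        exact h u hu⟩
    · intro x
      obtain ⟨hne, hcp, _⟩ := hF.2 x
      set a := sInf (valuesAt F x) with ha
      set b := sSup (valuesAt F x) with hb
      have hIcc : valuesAt F x = Icc a b := fiber_eq_Icc hF x
      have hab : a ≤ b := by
        obtain ⟨y, hy⟩ := hne
        rw [hIcc] at hy
        exact le_trans hy.1 hy.2
      have himg : φ '' Icc a b = Icc (φ a) (φ b) := by
        apply Subset.antisymm
        · rintro _ ⟨y, hy, rfl⟩
          exact ⟨hφmono.monotone hy.1, hφmono.monotone hy.2⟩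
        · exact intermediate_value_Icc hab hφcont.continuousOn
      refine ⟨?_, ?_, ?_⟩
      · rw [hVal x]; exact hne.image φ
      · rw [hVal x]; exact hcp.image hφcont
      · rw [hVal x, hIcc, himg]; exact convex_Icc _ _
  have hF'V' : F' ⊆ V' := by
    rintro ⟨x, y⟩ ⟨⟨a, b⟩, hab, heq⟩
    simp only [Prod.mk.injEq] at heq
    obtain ⟨rfl, rfl⟩ := heq
    refine ⟨hφIoo b, ?_⟩
    rw [hψφ b]
    exact hFV hab
  obtain ⟨f', hf'c, hf'V'⟩ := selection_bounded hF' hV'open hF'V' (fun p hp => hp.1)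
  have hIoo : ∀ x, f' x ∈ Ioo (-1 : ℝ) 1 := fun x => (hf'V' x).1
  refine ⟨fun x => f' x / (1 - |f' x|), ?_, fun x => (hf'V' x).2⟩
  apply hf'c.div (continuous_const.sub (continuous_abs.comp hf'c))
  intro x
  have h1 : |f' x| < 1 := abs_lt.2 ⟨(hIoo x).1, (hIoo x).2⟩
  simp only [Pi.sub_apply, Function.comp_apply]
  intro h
  linarith

end Selection

/-- Around the graph of a continuous function inside an open set `V`, there is an open set `Q`
with a radius function `r` controlling vertical closure inside `V`. -/
theorem exists_Q {f : X → ℝ} (hf : Continuous f) {V : Set (X × ℝ)} (hV : IsOpen V)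
    (hgV : ∀ x, (x, f x) ∈ V) {ε : ℝ} (hε : 0 < ε) :
    ∃ (Q : Set (X × ℝ)) (r : X → ℝ), IsOpen Q ∧ (∀ x, (x, f x) ∈ Q) ∧
      (∀ p ∈ Q, |p.2 - f p.1| < r p.1) ∧ (∀ x y, |y - f x| ≤ r x → (x, y) ∈ V) ∧
      (∀ x, r x ≤ ε) := by
  classical
  set T : X → Set ℝ := fun x =>
    {t | 0 ≤ t ∧ t ≤ ε ∧ ∀ y ∈ Icc (f x - t) (f x + t), (x, y) ∈ V} with hTdef
  have hT0 : ∀ x, (0 : ℝ) ∈ T x := by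
    intro x
    refine ⟨le_refl _, le_of_lt hε, ?_⟩
    intro y hy
    have : y = f x := le_antisymm (by simpa using hy.2) (by simpa using hy.1)
    rw [this]; exact hgV x
  have hTne : ∀ x, (T x).Nonempty := fun x => ⟨0, hT0 x⟩
  have hTbdd : ∀ x, BddAbove (T x) := fun x => ⟨ε, fun t ht => ht.2.1⟩
  set ρ : X → ℝ := fun x => sSup (T x) with hρdef
  have hρle : ∀ x, ρ x ≤ ε := fun x => csSup_le (hTne x) (fun t ht => ht.2.1)
  have hIccV : ∀ x t, 0 ≤ t → t < ρ x → ∀ y ∈ Icc (f x - t) (f x + t), (x, y) ∈ V := by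
    intro x t ht0 htρ y hy
    obtain ⟨s, hs, hst⟩ := exists_lt_of_lt_csSup (hTne x) htρ
    exact hs.2.2 y ⟨le_trans (by linarith) hy.1, le_trans hy.2 (by linarith)⟩
  have hρpos : ∀ x, 0 < ρ x := by
    intro x
    obtain ⟨U, δ, hU, hxU, hδ, htube⟩ := seg_tube hV (le_refl (f x)) (by
      intro y hy
      have : y = f x := le_antisymm hy.2 hy.1
      rw [this]; exact hgV x)
    have hmem : min (δ / 2) ε ∈ T x := by
      refine ⟨le_min (by linarith) (le_of_lt hε), min_le_right _ _, ?_⟩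
      intro y hy
      apply htube x hxU y
      have h1 : min (δ / 2) ε ≤ δ / 2 := min_le_left _ _
      constructor
      · have := hy.1; linarith
      · have := hy.2; linarith
    have := le_csSup (hTbdd x) hmem
    have : 0 < min (δ / 2) ε := lt_min (by linarith) hε
    linarith [le_csSup (hTbdd x) hmem]
  have hρlsc : ∀ x₀ c, 0 < c → c < ρ x₀ → ∃ U, IsOpen U ∧ x₀ ∈ U ∧ ∀ x ∈ U, c ≤ ρ x := by
    intro x₀ c hc hcρ
    set c' : ℝ := (c + ρ x₀) / 2 with hc'def
    have hc'1 : c < c' := by rw [hc'def]; linarith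
    have hc'2 : c' < ρ x₀ := by rw [hc'def]; linarith
    have hc'0 : 0 ≤ c' := by linarith
    obtain ⟨U₀, δ, hU₀, hxU₀, hδ, htube⟩ := seg_tube hV (by linarith : f x₀ - c' ≤ f x₀ + c')
      (hIccV x₀ c' hc'0 hc'2)
    refine ⟨U₀ ∩ f ⁻¹' Ioo (f x₀ - (c' - c)) (f x₀ + (c' - c)),
      hU₀.inter (isOpen_Ioo.preimage hf), ⟨hxU₀, by constructor <;> simp <;> linarith⟩, ?_⟩
    rintro x ⟨hxU, hxf⟩
    have hcT : c ∈ T x := by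
      refine ⟨le_of_lt hc, le_of_lt (lt_of_lt_of_le hcρ (hρle x₀)), ?_⟩
      intro y hy
      apply htube x hxU y
      obtain ⟨hf1, hf2⟩ := hxf
      constructor
      · have := hy.1; linarith
      · have := hy.2; linarith
    exact le_csSup (hTbdd x) hcT
  set Q : Set (X × ℝ) := {p | |p.2 - f p.1| < ρ p.1 / 2} with hQdef
  refine ⟨Q, fun x => ρ x / 2, ?_, ?_, ?_, ?_, ?_⟩
  · -- openness
    rw [isOpen_iff_mem_nhds]
    rintro ⟨x₀, y₀⟩ hQ₀
    simp only [hQdef, mem_setOf_eq] at hQ₀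
    set d : ℝ := |y₀ - f x₀| with hddef
    set R : ℝ := ρ x₀ / 2 with hRdef
    have hdR : d < R := hQ₀
    have hd0 : 0 ≤ d := abs_nonneg _
    set η : ℝ := (R - d) / 8 with hηdef
    have hη : 0 < η := by rw [hηdef]; linarith
    obtain ⟨U, hU, hxU, hρU⟩ := hρlsc x₀ (d + R) (by linarith) (by rw [hRdef]; linarith [hρpos x₀])
    have hopen : IsOpen ((U ∩ f ⁻¹' Ioo (f x₀ - η) (f x₀ + η)) ×ˢ Ioo (y₀ - η) (y₀ + η)) :=
      (hU.inter (isOpen_Ioo.preimage hf)).prod isOpen_Ioo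
    refine Filter.mem_of_superset (hopen.mem_nhds ⟨⟨hxU, by constructor <;> simp <;> linarith⟩,
      by constructor <;> linarith⟩) ?_
    rintro ⟨x, y⟩ ⟨⟨hxU', hxf⟩, hy⟩
    simp only [hQdef, mem_setOf_eq]
    obtain ⟨hf1, hf2⟩ := hxf
    obtain ⟨hy1, hy2⟩ := hy
    have h1 : |y - f x| ≤ |y - y₀| + |y₀ - f x₀| + |f x₀ - f x| := by
      calc |y - f x| = |(y - y₀) + (y₀ - f x₀) + (f x₀ - f x)| := by ring_nf
        _ ≤ |(y - y₀) + (y₀ - f x₀)| + |f x₀ - f x| := abs_add_le _ _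
        _ ≤ |y - y₀| + |y₀ - f x₀| + |f x₀ - f x| := by
            have := abs_add_le (y - y₀) (y₀ - f x₀)
            linarith
    have h2 : |y - y₀| < η := abs_lt.2 ⟨by linarith, by linarith⟩
    have h3 : |f x₀ - f x| < η := abs_lt.2 ⟨by linarith, by linarith⟩
    have h4 : d + R ≤ ρ x := hρU x hxU'
    have : |y - f x| < d + 2 * η := by linarith
    have hgoal : d + 2 * η < (d + R) / 2 := by rw [hηdef]; linarith
    linarith
  · intro x
    simp only [hQdef, mem_setOf_eq]
    simp only [sub_self, abs_zero]
    linarith [hρpos x]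
  · intro p hp
    exact hp
  · intro x y hy
    have hρ2 : ρ x / 2 < ρ x := by linarith [hρpos x]
    apply hIccV x (ρ x / 2) (by linarith [hρpos x]) hρ2 y
    rw [abs_sub_le_iff] at hy
    constructor <;> linarith [hy.1, hy.2]
  · intro x
    linarith [hρle x, hρpos x]


/-- data of one stage of the construction -/
structure Stage (X : Type*) [TopologicalSpace X] where
  f : X → ℝ
  V : Set (X × ℝ)
  hf : Continuous f
  hV : IsOpen V
  hfV : ∀ x, (x, f x) ∈ V

theorem baire_of [NormalSpace X] (S : Set (Set (X × ℝ)))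
    (hS1 : ∀ F ∈ S, IsCusco F)
    (hS2 : ∀ f : X → ℝ, Continuous f → graphOf f ∈ S) :
    @BaireSpace S (upperVietoris S) := by
  classical
  letI : TopologicalSpace S := upperVietoris S
  have hgen : (upperVietoris S : TopologicalSpace S) = generateFrom
      {U : Set S | ∃ W : Set (X × ℝ), IsOpen W ∧ U = {A : S | (A : Set (X × ℝ)) ⊆ W}} := rfl
  have hbasis := isTopologicalBasis_of_subbasis hgen
  have hbasic_open : ∀ W : Set (X × ℝ), IsOpen W → IsOpen {A : S | (A : Set (X × ℝ)) ⊆ W} := by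
    intro W hW
    exact isOpen_generateFrom_of_mem ⟨W, hW, rfl⟩
  -- extraction of a basic neighbourhood inside an open set
  have hextract : ∀ G : Set S, IsOpen G → ∀ A : S, A ∈ G →
      ∃ W : Set (X × ℝ), IsOpen W ∧ (A : Set (X × ℝ)) ⊆ W ∧
        ∀ B : S, (B : Set (X × ℝ)) ⊆ W → B ∈ G := by
    intro G hG A hA
    obtain ⟨b, hb, hAb, hbG⟩ := hbasis.exists_subset_of_mem_open hA hG
    obtain ⟨Tfam, ⟨hTfin, hTsub⟩, rfl⟩ := hb
    choose w hw1 hw2 using fun (t : Set S) (ht : t ∈ Tfam) => hTsub ht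
    refine ⟨⋂ t ∈ Tfam, ⋂ (ht : t ∈ Tfam), w t ht, ?_, ?_, ?_⟩
    · exact hTfin.isOpen_biInter (fun t ht => isOpen_iInter_of_finite (fun ht' => hw1 t ht'))
    · intro p hp
      simp only [mem_iInter]
      intro t ht ht'
      have hAt : A ∈ t := hAb t ht
      rw [hw2 t ht'] at hAt
      exact hAt hp
    · intro B hB
      apply hbG
      intro t ht
      rw [hw2 t ht]
      intro p hp
      have := hB hp
      simp only [mem_iInter] at this
      exact this t ht ht
  -- key step
  have key : ∀ s : Stage X, ∀ G : Set S, IsOpen G → Dense G → ∀ ε : ℝ, 0 < ε →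
      ∃ (s' : Stage X) (r : X → ℝ),
        (∀ A : S, (A : Set (X × ℝ)) ⊆ s'.V → A ∈ G) ∧
        (∀ p ∈ s'.V, |p.2 - s.f p.1| < r p.1) ∧
        (∀ x y, |y - s.f x| ≤ r x → (x, y) ∈ s.V) ∧ (∀ x, r x ≤ ε) := by
    intro s G hG hGd ε hε
    obtain ⟨Q, r, hQopen, hQgraph, hQwidth, hQclose, hrle⟩ := exists_Q s.hf s.hV s.hfV hε
    set pQ : S := ⟨graphOf s.f, hS2 s.f s.hf⟩ with hpQdef
    have hpQmem : pQ ∈ {A : S | (A : Set (X × ℝ)) ⊆ Q} := by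
      rintro ⟨x, y⟩ hy
      have : y = s.f x := hy
      rw [this]
      exact hQgraph x
    obtain ⟨A', hA'Q, hA'G⟩ := dense_iff_inter_open.1 hGd _ (hbasic_open Q hQopen) ⟨pQ, hpQmem⟩
    obtain ⟨W, hWopen, hA'W, hWG⟩ := hextract G hG A' hA'G
    have hsub : (A' : Set (X × ℝ)) ⊆ Q ∩ W := subset_inter hA'Q hA'W
    obtain ⟨f', hf'c, hf'⟩ := selection (hS1 A' A'.2) (hQopen.inter hWopen) hsub
    refine ⟨⟨f', Q ∩ W, hf'c, hQopen.inter hWopen, hf'⟩, r, ?_, ?_, hQclose, hrle⟩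
    · intro A hA
      exact hWG A (fun p hp => (hA hp).2)
    · intro p hp
      exact hQwidth p hp.1
  -- Baire property
  refine ⟨?_⟩
  intro Gseq hGopen hGdense
  rw [hbasis.dense_iff]
  rintro o ho ⟨A₀, hA₀o⟩
  obtain ⟨W₀, hW₀open, hA₀W₀, hW₀o⟩ := hextract o (hbasis.isOpen ho) A₀ hA₀o
  obtain ⟨f₀, hf₀c, hf₀⟩ := selection (hS1 A₀ A₀.2) hW₀open hA₀W₀
  set s₀ : Stage X := ⟨f₀, W₀, hf₀c, hW₀open, hf₀⟩ with hs₀def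
  have key2 : ∀ n : ℕ, ∀ s : Stage X, ∃ s' : Stage X, ∃ r : X → ℝ,
      (∀ A : S, (A : Set (X × ℝ)) ⊆ s'.V → A ∈ Gseq n) ∧
      (∀ p ∈ s'.V, |p.2 - s.f p.1| < r p.1) ∧
      (∀ x y, |y - s.f x| ≤ r x → (x, y) ∈ s.V) ∧ (∀ x, r x ≤ (1/2 : ℝ) ^ n) := by
    intro n s
    obtain ⟨s', r, h1, h2, h3, h4⟩ := key s (Gseq n) (hGopen n) (hGdense n) ((1/2 : ℝ) ^ n)
      (by positivity)
    exact ⟨s', r, h1, h2, h3, h4⟩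
  set seq : ℕ → Stage X := fun n => Nat.rec s₀ (fun n s => (key2 n s).choose) n with hseqdef
  have hseqsucc : ∀ n : ℕ, seq (n + 1) = (key2 n (seq n)).choose := fun n => rfl
  have hrel : ∀ n : ℕ, ∃ r : X → ℝ,
      (∀ A : S, (A : Set (X × ℝ)) ⊆ (seq (n+1)).V → A ∈ Gseq n) ∧
      (∀ p ∈ (seq (n+1)).V, |p.2 - (seq n).f p.1| < r p.1) ∧
      (∀ x y, |y - (seq n).f x| ≤ r x → (x, y) ∈ (seq n).V) ∧ (∀ x, r x ≤ (1/2 : ℝ) ^ n) := by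
    intro n
    rw [hseqsucc n]
    exact (key2 n (seq n)).choose_spec
  have hVdesc : ∀ n : ℕ, (seq (n+1)).V ⊆ (seq n).V := by
    intro n p hp
    obtain ⟨r, _, h2, h3, _⟩ := hrel n
    exact h3 p.1 p.2 (le_of_lt (h2 p hp))
  have hchain : ∀ n k : ℕ, n ≤ k → (seq k).V ⊆ (seq n).V := by
    intro n k hnk
    induction k, hnk using Nat.le_induction with
    | base => exact fun p hp => hp
    | succ k hk ih => exact (hVdesc k).trans ih
  -- drift bounds
  have hdrift : ∀ n k : ℕ, n < k → ∀ x, ∀ r : X → ℝ,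
      (∀ p ∈ (seq (n+1)).V, |p.2 - (seq n).f p.1| < r p.1) →
      |(seq k).f x - (seq n).f x| < r x := by
    intro n k hnk x r hr
    apply hr (x, (seq k).f x)
    exact hchain (n+1) k hnk ((seq k).hfV x)
  have hdist : ∀ n : ℕ, ∀ x, dist ((seq n).f x) ((seq (n+1)).f x) ≤ (1/2 : ℝ) ^ n := by
    intro n x
    obtain ⟨r, _, h2, _, h4⟩ := hrel n
    rw [dist_comm, Real.dist_eq]
    exact le_trans (le_of_lt (hdrift n (n+1) (Nat.lt_succ_self n) x r h2)) (h4 x)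
  have hCauchy : ∀ x, CauchySeq (fun k => (seq k).f x) := by
    intro x
    apply cauchySeq_of_le_geometric (1/2 : ℝ) 1 (by norm_num)
    intro n
    rw [one_mul]
    exact hdist n x
  have hlim : ∀ x, ∃ l : ℝ, Filter.Tendsto (fun k => (seq k).f x) Filter.atTop (nhds l) :=
    fun x => cauchySeq_tendsto_of_complete (hCauchy x)
  choose finf hfinf using hlim
  have hmemV : ∀ n : ℕ, ∀ x, (x, finf x) ∈ (seq n).V := by
    intro n x
    obtain ⟨r, _, h2, h3, _⟩ := hrel n
    apply h3
    have htend : Filter.Tendsto (fun k => |(seq k).f x - (seq n).f x|) Filter.atTop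
        (nhds (|finf x - (seq n).f x|)) :=
      (((hfinf x).sub_const _).abs)
    apply le_of_tendsto htend
    filter_upwards [Filter.eventually_ge_atTop (n+1)] with k hk
    exact le_of_lt (hdrift n k hk x r h2)
  have hub : ∀ n : ℕ, ∀ x, |finf x - (seq n).f x| ≤ (1/2 : ℝ) ^ n := by
    intro n x
    have htend : Filter.Tendsto (fun k => |(seq k).f x - (seq n).f x|) Filter.atTop
        (nhds (|finf x - (seq n).f x|)) :=
      (((hfinf x).sub_const _).abs)
    apply le_of_tendsto htend
    filter_upwards [Filter.eventually_ge_atTop (n+1)] with k hk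
    obtain ⟨r, _, h2, _, h4⟩ := hrel n
    exact le_trans (le_of_lt (hdrift n k hk x r h2)) (h4 x)
  have huc : TendstoUniformly (fun n x => (seq n).f x) finf Filter.atTop := by
    rw [Metric.tendstoUniformly_iff]
    intro ε hε
    obtain ⟨N, hN⟩ := exists_pow_lt_of_lt_one hε (by norm_num : (1/2 : ℝ) < 1)
    filter_upwards [Filter.eventually_ge_atTop N] with n hn x
    rw [dist_comm, Real.dist_eq]
    calc |(seq n).f x - finf x| = |finf x - (seq n).f x| := abs_sub_comm _ _
      _ ≤ (1/2 : ℝ) ^ n := hub n x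
      _ ≤ (1/2 : ℝ) ^ N := pow_le_pow_of_le_one (by norm_num) (by norm_num) hn
      _ < ε := hN
  have hfinfc : Continuous finf :=
    huc.continuous (Filter.Eventually.of_forall (fun n => (seq n).hf)).frequently
  set Ainf : S := ⟨graphOf finf, hS2 finf hfinfc⟩ with hAinfdef
  have hgraphsub : ∀ n : ℕ, (Ainf : Set (X × ℝ)) ⊆ (seq n).V := by
    intro n
    rintro ⟨x, y⟩ hy
    have : y = finf x := hy
    rw [this]
    exact hmemV n x
  refine ⟨Ainf, ?_, ?_⟩
  · exact hW₀o Ainf (hgraphsub 0)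
  · rw [mem_iInter]
    intro n
    obtain ⟨r, h1, _, _, _⟩ := hrel n
    exact h1 Ainf (hgraphsub (n+1))


theorem valuesAt_graphOf (f : X → ℝ) (x : X) : valuesAt (graphOf f) x = {f x} := by
  ext y
  simp only [valuesAt, graphOf, mem_setOf_eq, mem_singleton_iff]

theorem graphOf_isCusco (f : X → ℝ) (hf : Continuous f) : IsCusco (graphOf f) := by
  constructor
  · intro x V hV hsub
    have hx : f x ∈ V := hsub (show (x, f x) ∈ graphOf f from rfl)
    refine ⟨f ⁻¹' V, hV.preimage hf, hx, ?_⟩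
    intro u hu y hy
    have : y = f u := hy
    rw [this]; exact hu
  · intro x
    rw [valuesAt_graphOf]
    exact ⟨⟨f x, rfl⟩, isCompact_singleton, convex_singleton _⟩

theorem graphOf_isMinimalCusco (f : X → ℝ) (hf : Continuous f) :
    IsMinimalCusco (graphOf f) := by
  refine ⟨graphOf_isCusco f hf, ?_⟩
  intro G hG hGsub
  apply Subset.antisymm hGsub
  rintro ⟨x, y⟩ hy
  obtain ⟨z, hz⟩ := (hG.2 x).1
  have hzf : z = f x := hGsub hz
  have hyf : y = f x := hy
  rw [hyf, ← hzf]
  exact hz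

end BUV

/-- For normal Hausdorff `X`, the spaces `(L(X), τ_V⁺)`, `(L₀(X), τ_V⁺)` and
`(MC(X), τ_V⁺)` are Baire spaces. -/
theorem baire_upperVietoris {X : Type*} [TopologicalSpace X] [T2Space X]
    [NormalSpace X] :
    (@BaireSpace _ (upperVietoris (LSet X))) ∧
    (@BaireSpace _ (upperVietoris (L0Set X))) ∧
    (@BaireSpace _ (upperVietoris (MCSet X))) := by
  refine ⟨?_, ?_, ?_⟩
  · exact BUV.baire_of (LSet X) (fun F hF => hF) (fun f hf => BUV.graphOf_isCusco f hf)
  · refine BUV.baire_of (L0Set X) (fun F hF => hF.1) (fun f hf => ?_)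
    exact ⟨BUV.graphOf_isCusco f hf, fun x _ => ⟨f x, BUV.valuesAt_graphOf f x⟩⟩
  · exact BUV.baire_of (MCSet X) (fun F hF => hF.1)
      (fun f hf => BUV.graphOf_isMinimalCusco f hf)
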